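/- For all integers n and i with 1 ≤ i ≤ n-1, the binomial coefficient satisfies C(n,i) < (1/√(2π·i·(1 - i/n))) · 2^{n·H(i/n)}. -/

import Mathlib

/-- Binary entropy function (base 2). -/
noncomputable def binH (x : ℝ) : ℝ := -x * Real.logb 2 x - (1 - x) * Real.logb 2 (1 - x)

open Stirling Real Filter Topology

private lemma sqrt_pi_le_stirlingSeq' (m : ℕ) : Real.sqrt π ≤ stirlingSeq (m + 1) := by
  have ht : Tendsto (stirlingSeq ∘ Nat.succ) atTop (𝓝 (Real.sqrt π)) :=
    tendsto_stirlingSeq_sqrt_pi.comp (tendsto_add_atTop_nat 1)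
  exact stirlingSeq'_antitone.le_of_tendsto ht m

private lemma sqrt_pi_lt_stirlingSeq' (m : ℕ) : Real.sqrt π < stirlingSeq (m + 1) := by
  have h2 := sqrt_pi_le_stirlingSeq' (m + 1)
  have hsum := log_stirlingSeq_diff_hasSum m
  have hle := le_hasSum hsum 0 (fun k _ => by positivity)
  have h0 : (0:ℝ) < (1 : ℝ) / (2 * ((0:ℕ) + 1 : ℕ) + 1) *
      ((1 / (2 * (↑(m + 1) : ℝ) + 1)) ^ 2) ^ ((0:ℕ) + 1 : ℕ) := by positivity
  have hlt : Real.log (stirlingSeq (m + 2)) < Real.log (stirlingSeq (m + 1)) := by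
    push_cast at hle h0 ⊢
    linarith
  have := (Real.log_lt_log_iff (stirlingSeq'_pos (m + 1)) (stirlingSeq'_pos m)).mp hlt
  linarith

/-- For `1 ≤ i ≤ n-1`, `C(n,i) < (1/√(2π·i·(1-i/n))) · 2^(n·H(i/n))`. -/
theorem stmt10 (n i : ℕ) (h1 : 1 ≤ i) (h2 : i ≤ n - 1) :
    (n.choose i : ℝ)
      < (1 / Real.sqrt (2 * Real.pi * (i : ℝ) * (1 - (i : ℝ) / (n : ℝ))))
        * (2 : ℝ) ^ ((n : ℝ) * binH ((i : ℝ) / (n : ℝ))) := by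
  -- set up m with n = i + m, m ≥ 1
  have hin : i + 1 ≤ n := by omega
  obtain ⟨m, rfl⟩ : ∃ m, n = i + m := ⟨n - i, by omega⟩
  have hm : 1 ≤ m := by omega
  set I : ℝ := (i : ℝ) with hI
  set M : ℝ := (m : ℝ) with hM
  have hIpos : 0 < I := by rw [hI]; exact Nat.cast_pos.mpr h1
  have hMpos : 0 < M := by rw [hM]; exact Nat.cast_pos.mpr hm
  have hNpos : 0 < I + M := by linarith
  have hNcast : ((i + m : ℕ) : ℝ) = I + M := by push_cast; ring
  -- 1 - I/N = M/N
  have hone : 1 - I / (I + M) = M / (I + M) := by field_simp; ring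
  -- the rpow term equals N^n / (I^i * M^m)
  have hRpos : (0:ℝ) < (I + M) ^ (i + m) / (I ^ i * M ^ m) := by positivity
  have hkey : ((i + m : ℕ) : ℝ) * binH ((i : ℝ) / ((i + m : ℕ) : ℝ))
      = Real.logb 2 ((I + M) ^ (i + m) / (I ^ i * M ^ m)) := by
    rw [hNcast, binH, hone, Real.logb, Real.logb, Real.logb,
      Real.log_div (by positivity) (by positivity),
      Real.log_div (by positivity) (by positivity),
      Real.log_div (by positivity) (by positivity),
      Real.log_mul (by positivity) (by positivity),
      Real.log_pow, Real.log_pow]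
    have hlog2 : Real.log 2 ≠ 0 :=
      ne_of_gt (Real.log_pos (by norm_num))
    push_cast
    field_simp
    simp only [← hI, ← hM, Real.log_pow]
    ring
  have hrpow : (2 : ℝ) ^ (((i + m : ℕ) : ℝ) * binH ((i : ℝ) / ((i + m : ℕ) : ℝ)))
      = (I + M) ^ (i + m) / (I ^ i * M ^ m) := by
    rw [hkey, Real.rpow_logb two_pos (by norm_num) hRpos]
  -- factorial formula
  have hfac : ∀ k : ℕ, 1 ≤ k →
      (k.factorial : ℝ) = stirlingSeq k * (Real.sqrt (2 * k) * ((k : ℝ) / Real.exp 1) ^ k) := by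
    intro k hk
    have hk' : (0:ℝ) < (k:ℝ) := by exact_mod_cast hk
    rw [stirlingSeq]
    field_simp
  have hfacpos : ∀ k : ℕ, (0:ℝ) < (k.factorial : ℝ) := fun k => by
    exact_mod_cast k.factorial_pos
  have hchoose : ((i + m).choose i : ℝ)
      = ((i + m).factorial : ℝ) / ((i.factorial : ℝ) * (m.factorial : ℝ)) := by
    rw [eq_div_iff (ne_of_gt (mul_pos (hfacpos i) (hfacpos m)))]
    have h := Nat.choose_mul_factorial_mul_factorial (Nat.le_add_right i m)
    rw [show i + m - i = m by omega] at h
    push_cast [← h]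
    ring
  -- abbreviations
  set sn := stirlingSeq (i + m) with hsn
  set si := stirlingSeq i with hsi
  set sm := stirlingSeq m with hsm
  have hsnpos : 0 < sn := by
    obtain ⟨k, hk⟩ : ∃ k, i + m = k + 1 := ⟨i + m - 1, by omega⟩
    rw [hsn, hk]; exact stirlingSeq'_pos k
  have hsipos : 0 < si := by
    obtain ⟨k, hk⟩ : ∃ k, i = k + 1 := ⟨i - 1, by omega⟩
    rw [hsi, hk]; exact stirlingSeq'_pos k
  have hsmlt : Real.sqrt π < sm := by
    obtain ⟨k, hk⟩ : ∃ k, m = k + 1 := ⟨m - 1, by omega⟩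
    rw [hsm, hk]; exact sqrt_pi_lt_stirlingSeq' k
  have hsmpos : 0 < sm := lt_trans (Real.sqrt_pos.mpr Real.pi_pos) hsmlt
  have hsnle : sn ≤ si := by
    obtain ⟨k, hk⟩ : ∃ k, i = k + 1 := ⟨i - 1, by omega⟩
    obtain ⟨l, hl⟩ : ∃ l, i + m = l + 1 := ⟨i + m - 1, by omega⟩
    have := stirlingSeq'_antitone (show k ≤ l by omega)
    simpa [Function.comp, Nat.succ_eq_add_one, ← hk, ← hl] using this
  -- C value
  set C : ℝ := Real.sqrt ((I + M) / (2 * I * M)) * ((I + M) ^ (i + m) / (I ^ i * M ^ m)) with hC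
  have hCpos : 0 < C := by
    rw [hC]; positivity
  -- sqrt algebra: √(2N) = √(N/(2IM)) * (√(2I) * √(2M))
  have hsqrt : Real.sqrt (2 * (I + M)) =
      Real.sqrt ((I + M) / (2 * I * M)) * (Real.sqrt (2 * I) * Real.sqrt (2 * M)) := by
    rw [← Real.sqrt_mul (by positivity) (2 * M), ← Real.sqrt_mul (by positivity)]
    congr 1
    field_simp
  -- choose = (sn/(si*sm)) * C
  have hchoose2 : ((i + m).choose i : ℝ) = sn / (si * sm) * C := by
    rw [hchoose, hfac (i + m) (by omega), hfac i h1, hfac m hm, hC]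
    rw [hNcast, hsqrt]
    have hE : (0:ℝ) < Real.exp 1 := Real.exp_pos 1
    rw [div_pow, div_pow, div_pow, pow_add]
    simp only [← hI, ← hM]
    have hs2I : (0:ℝ) < Real.sqrt (2 * I) := Real.sqrt_pos.mpr (by positivity)
    have hs2M : (0:ℝ) < Real.sqrt (2 * M) := Real.sqrt_pos.mpr (by positivity)
    field_simp
    simp only [← hsn, ← hsi, ← hsm]
    field_simp
    ring
  -- RHS = (1/√π) * C
  have hRHS : (1 / Real.sqrt (2 * Real.pi * I * (1 - I / ((i + m : ℕ) : ℝ))))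
      * (2 : ℝ) ^ (((i + m : ℕ) : ℝ) * binH ((i : ℝ) / ((i + m : ℕ) : ℝ)))
      = (1 / Real.sqrt π) * C := by
    rw [hrpow, hNcast, hone, hC]
    have h1 : 2 * π * I * (M / (I + M)) = π * ((I + M) / (2 * I * M))⁻¹ := by
      field_simp
    rw [h1, Real.sqrt_mul Real.pi_pos.le, Real.sqrt_inv]
    have hsp : (0:ℝ) < Real.sqrt π := Real.sqrt_pos.mpr Real.pi_pos
    have hsq : (0:ℝ) < Real.sqrt ((I + M) / (2 * I * M)) := Real.sqrt_pos.mpr (by positivity)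
    field_simp
  rw [hchoose2, hRHS]
  apply mul_lt_mul_of_pos_right _ hCpos
  rw [div_lt_div_iff₀ (by positivity) (Real.sqrt_pos.mpr Real.pi_pos)]
  calc sn * Real.sqrt π ≤ si * Real.sqrt π := by
        exact mul_le_mul_of_nonneg_right hsnle (Real.sqrt_nonneg _)
    _ < si * sm := by exact mul_lt_mul_of_pos_left hsmlt hsipos
    _ = 1 * (si * sm) := by ring
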